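/- Let G be a connected graph of order n with minimum degree δ ≥ 2 and power domination number γ_p ≥ 3. Then rad_p(G) ≤ n - γ_p - max{2γ_p, γ_p + δ} + 1. -/

import Mathlib

open scoped Classical

/-- The closed neighbourhood `N[S]` of a finset of vertices. -/
noncomputable def closedNbhd {V : Type*} [Fintype V] (G : SimpleGraph V) (S : Finset V) :
    Finset V :=
  S ∪ S.biUnion fun v => G.neighborFinset v

/-- One propagation step of power domination. -/
noncomputable def pdStep {V : Type*} [Fintype V] (G : SimpleGraph V) (A : Finset V) : Finset V :=
  A ∪ closedNbhd G (A.filter fun v => (G.neighborFinset v \ A).card ≤ 1)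

/-- The monitored sets `P^i(S)`, with `P^0(S) = ∅` and `P^1(S) = N[S]`. -/
noncomputable def pdSeq {V : Type*} [Fintype V] (G : SimpleGraph V) (S : Finset V) : ℕ → Finset V
  | 0 => ∅
  | 1 => closedNbhd G S
  | (i + 2) => pdStep G (pdSeq G S (i + 1))

/-- `S` is a power dominating set of `G`. -/
def IsPDS {V : Type*} [Fintype V] (G : SimpleGraph V) (S : Finset V) : Prop :=
  ∃ i, pdSeq G S i = Finset.univ

/-- The power domination number `γ_p(G)`. -/
noncomputable def pdNum {V : Type*} [Fintype V] (G : SimpleGraph V) : ℕ :=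
  sInf {k | ∃ S : Finset V, IsPDS G S ∧ S.card = k}

/-- The propagation radius `rad_p(G, S)` of a PDS `S`. -/
noncomputable def pdRadS {V : Type*} [Fintype V] (G : SimpleGraph V) (S : Finset V) : ℕ :=
  sInf {i | pdSeq G S i = Finset.univ}

/-- The propagation radius `rad_p(G)`. -/
noncomputable def pdRad {V : Type*} [Fintype V] (G : SimpleGraph V) : ℕ :=
  sInf {r | ∃ S : Finset V, IsPDS G S ∧ S.card = pdNum G ∧ pdRadS G S = r}

namespace PDAux

open Finset

variable {V : Type*} [Fintype V] (G : SimpleGraph V)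

lemma mem_closedNbhd {S : Finset V} {x : V} :
    x ∈ closedNbhd G S ↔ x ∈ S ∨ ∃ s ∈ S, G.Adj s x := by
  simp [closedNbhd, SimpleGraph.mem_neighborFinset]

lemma subset_closedNbhd (S : Finset V) : S ⊆ closedNbhd G S :=
  subset_union_left

lemma closedNbhd_mono {S T : Finset V} (h : S ⊆ T) :
    closedNbhd G S ⊆ closedNbhd G T := by
  intro x hx
  rw [mem_closedNbhd] at hx ⊢
  rcases hx with hx | ⟨s, hs, hadj⟩
  · exact Or.inl (h hx)
  · exact Or.inr ⟨s, h hs, hadj⟩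

lemma closedNbhd_union (A B : Finset V) :
    closedNbhd G (A ∪ B) = closedNbhd G A ∪ closedNbhd G B := by
  ext x
  rw [mem_union, mem_closedNbhd, mem_closedNbhd, mem_closedNbhd]
  constructor
  · rintro (h | ⟨s, hs, hadj⟩)
    · rcases mem_union.1 h with h | h
      · exact Or.inl (Or.inl h)
      · exact Or.inr (Or.inl h)
    · rcases mem_union.1 hs with hs | hs
      · exact Or.inl (Or.inr ⟨s, hs, hadj⟩)
      · exact Or.inr (Or.inr ⟨s, hs, hadj⟩)
  · rintro ((h | ⟨s, hs, hadj⟩) | (h | ⟨s, hs, hadj⟩))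
    · exact Or.inl (mem_union.2 (Or.inl h))
    · exact Or.inr ⟨s, mem_union.2 (Or.inl hs), hadj⟩
    · exact Or.inl (mem_union.2 (Or.inr h))
    · exact Or.inr ⟨s, mem_union.2 (Or.inr hs), hadj⟩

/-- `N[v]` as a finset. -/
noncomputable abbrev Nv (v : V) : Finset V := closedNbhd G {v}

lemma mem_Nv {v x : V} : x ∈ Nv G v ↔ x = v ∨ G.Adj v x := by
  simp [closedNbhd, SimpleGraph.mem_neighborFinset]

lemma self_mem_Nv (v : V) : v ∈ Nv G v := by rw [mem_Nv]; exact Or.inl rfl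

lemma nbr_mem_Nv {v x : V} (h : G.Adj v x) : x ∈ Nv G v := by
  rw [mem_Nv]; exact Or.inr h

lemma Nv_eq_insert (v : V) : Nv G v = insert v (G.neighborFinset v) := by
  ext x; simp [mem_Nv, SimpleGraph.mem_neighborFinset, or_comm]

lemma card_Nv (v : V) : (Nv G v).card = G.degree v + 1 := by
  rw [Nv_eq_insert, card_insert_of_notMem (by simp), SimpleGraph.card_neighborFinset_eq_degree]

lemma neighborFinset_subset_Nv (v : V) : G.neighborFinset v ⊆ Nv G v := by
  intro x hx
  exact nbr_mem_Nv G (by rwa [SimpleGraph.mem_neighborFinset] at hx)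

lemma Nv_subset {S : Finset V} {v : V} (h : v ∈ S) : Nv G v ⊆ closedNbhd G S :=
  closedNbhd_mono G (singleton_subset_iff.2 h)

lemma closedNbhd_eq_biUnion (S : Finset V) :
    closedNbhd G S = S.biUnion (fun v => Nv G v) := by
  ext x
  rw [mem_biUnion, mem_closedNbhd]
  constructor
  · rintro (h | ⟨s, hs, hadj⟩)
    · exact ⟨x, h, self_mem_Nv G x⟩
    · exact ⟨s, hs, nbr_mem_Nv G hadj⟩
  · rintro ⟨s, hs, h⟩
    rcases (mem_Nv G).1 h with rfl | hadj
    · exact Or.inl hs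
    · exact Or.inr ⟨s, hs, hadj⟩

lemma closedNbhd_sdiff (S F : Finset V) (h : F ⊆ S) :
    closedNbhd G S = closedNbhd G (S \ F) ∪ F.biUnion (fun v => Nv G v) := by
  have : S = (S \ F) ∪ F := by
    rw [sdiff_union_self_eq_union, union_eq_left.2 h]
  conv_lhs => rw [this]
  rw [closedNbhd_union, closedNbhd_eq_biUnion G F]

lemma closedNbhd_erase (S : Finset V) (v : V) (h : v ∈ S) :
    closedNbhd G S = closedNbhd G (S.erase v) ∪ Nv G v := by
  have := closedNbhd_sdiff G S {v} (singleton_subset_iff.2 h)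
  rw [this, sdiff_singleton_eq_erase, singleton_biUnion]

lemma subset_pdStep (A : Finset V) : A ⊆ pdStep G A := subset_union_left

lemma pdStep_mono {A B : Finset V} (h : A ⊆ B) : pdStep G A ⊆ pdStep G B := by
  apply union_subset_union h
  apply closedNbhd_mono
  intro v hv
  rw [mem_filter] at hv ⊢
  refine ⟨h hv.1, le_trans (card_le_card ?_) hv.2⟩
  exact sdiff_subset_sdiff (le_refl _) h

lemma pdSeq_succ_eq (S : Finset V) (m : ℕ) (hm : 1 ≤ m) :
    pdSeq G S (m + 1) = pdStep G (pdSeq G S m) := by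
  obtain ⟨k, rfl⟩ := Nat.exists_eq_add_of_le hm
  rw [Nat.add_comm 1 k]
  rfl

lemma pdSeq_subset_succ (S : Finset V) (m : ℕ) :
    pdSeq G S m ⊆ pdSeq G S (m + 1) := by
  match m with
  | 0 => exact empty_subset _
  | 1 => exact subset_pdStep G _
  | (k + 2) => exact subset_pdStep G _

lemma pdSeq_mono (S : Finset V) {i j : ℕ} (h : i ≤ j) :
    pdSeq G S i ⊆ pdSeq G S j := by
  induction j with
  | zero => simpa [Nat.le_zero.1 h] using subset_refl _
  | succ k ih =>
    rcases Nat.lt_or_ge i (k+1) with h' | h'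
    · exact (ih (Nat.lt_succ_iff.1 h')).trans (pdSeq_subset_succ G S k)
    · have : i = k + 1 := le_antisymm h h'
      simp [this]

lemma propagate {A : Finset V} {w : V} (hw : w ∈ A)
    (h1 : (G.neighborFinset w \ A).card ≤ 1) :
    Nv G w ⊆ pdStep G A := by
  have hwf : w ∈ A.filter (fun v => (G.neighborFinset v \ A).card ≤ 1) := by
    rw [mem_filter]; exact ⟨hw, h1⟩
  calc Nv G w ⊆ closedNbhd G (A.filter fun v => (G.neighborFinset v \ A).card ≤ 1) :=
        closedNbhd_mono G (singleton_subset_iff.2 hwf)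
    _ ⊆ pdStep G A := subset_union_right

lemma pdSeq_two (S : Finset V) : pdSeq G S 2 = pdStep G (closedNbhd G S) := rfl

lemma pdSeq_one (S : Finset V) : pdSeq G S 1 = closedNbhd G S := rfl

/-- Transfer lemma: if `N[S]` is contained in the second monitored set of `T`,
and `S` is a PDS, then `T` is a PDS. -/
lemma transfer {S T : Finset V} (hS : IsPDS G S)
    (h : closedNbhd G S ⊆ pdSeq G T 2) : IsPDS G T := by
  have chain : ∀ i, pdSeq G S (1 + i) ⊆ pdSeq G T (2 + i) := by
    intro i
    induction i with
    | zero => simpa [pdSeq_one] using h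
    | succ k ih =>
      have e1 : 1 + (k + 1) = (1 + k) + 1 := by ring
      have e2 : 2 + (k + 1) = (2 + k) + 1 := by ring
      rw [e1, e2, pdSeq_succ_eq G S _ (by omega), pdSeq_succ_eq G T _ (by omega)]
      exact pdStep_mono G ih
  obtain ⟨i, hi⟩ := hS
  match i, hi with
  | 0, hi =>
    exact ⟨0, hi⟩
  | (k + 1), hi =>
    refine ⟨2 + k, ?_⟩
    apply univ_subset_iff.1
    rw [← hi]
    have := chain k
    rwa [Nat.add_comm 1 k] at this

lemma isPDS_univ : IsPDS G (univ : Finset V) :=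
  ⟨1, univ_subset_iff.1 (subset_closedNbhd G univ)⟩

lemma pdNum_le_card {S : Finset V} (hS : IsPDS G S) : pdNum G ≤ S.card :=
  Nat.sInf_le ⟨S, hS, rfl⟩

lemma exists_pdNum_set : ∃ S : Finset V, IsPDS G S ∧ S.card = pdNum G := by
  have hne : {k | ∃ S : Finset V, IsPDS G S ∧ S.card = k}.Nonempty :=
    ⟨(univ : Finset V).card, univ, isPDS_univ G, rfl⟩
  exact Nat.sInf_mem hne

lemma pdSeq_stall {S : Finset V} {m : ℕ} (hm : 1 ≤ m)
    (h : pdSeq G S (m + 1) = pdSeq G S m) :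
    ∀ j, m ≤ j → pdSeq G S j = pdSeq G S m := by
  intro j hj
  induction j with
  | zero => omega
  | succ k ih =>
    rcases Nat.lt_or_ge m (k+1) with h' | h'
    · have hk : m ≤ k := by omega
      have hk1 : 1 ≤ k := le_trans hm hk
      rw [pdSeq_succ_eq G S k hk1, ih hk, ← pdSeq_succ_eq G S m hm, h]
    · have : m = k + 1 := le_antisymm hj h'
      rw [this]

lemma pdSeq_growth {S : Finset V} (hS : IsPDS G S) :
    ∀ k, pdSeq G S (k + 1) = univ ∨
      (closedNbhd G S).card + k ≤ (pdSeq G S (k + 1)).card := by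
  intro k
  induction k with
  | zero => right; simp [pdSeq_one]
  | succ k ih =>
    rcases ih with h | h
    · left
      exact univ_subset_iff.1 (h ▸ pdSeq_subset_succ G S (k+1))
    · by_cases hu : pdSeq G S (k + 1 + 1) = univ
      · exact Or.inl hu
      · right
        have hne : pdSeq G S (k + 1 + 1) ≠ pdSeq G S (k + 1) := by
          intro heq
          obtain ⟨i, hi⟩ := hS
          rcases Nat.lt_or_ge i (k+1) with hik | hik
          · have := pdSeq_mono G S (le_of_lt hik)
            rw [hi] at this
            exact hu (univ_subset_iff.1 ((univ_subset_iff.1 this) ▸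
              pdSeq_subset_succ G S (k+1)))
          · have := pdSeq_stall G (by omega) heq i hik
            rw [hi] at this
            exact hu (by rw [pdSeq_stall G (by omega : (1:ℕ) ≤ k+1) heq (k+1+1) (by omega), ← this])
        have hss : pdSeq G S (k+1) ⊂ pdSeq G S (k+1+1) :=
          Finset.ssubset_iff_subset_ne.2 ⟨pdSeq_subset_succ G S (k+1), fun he => hne he.symm⟩
        have := card_lt_card hss
        omega

lemma pdRadS_le_of {S : Finset V} (hS : IsPDS G S) :
    pdRadS G S ≤ Fintype.card V - (closedNbhd G S).card + 1 := by
  have hcle : (closedNbhd G S).card ≤ Fintype.card V := card_le_univ _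
  have := pdSeq_growth G hS (Fintype.card V - (closedNbhd G S).card)
  have huniv : pdSeq G S (Fintype.card V - (closedNbhd G S).card + 1) = univ := by
    rcases this with h | h
    · exact h
    · apply eq_univ_of_card
      have h2 : Fintype.card V ≤ (pdSeq G S (Fintype.card V - (closedNbhd G S).card + 1)).card := by
        omega
      exact le_antisymm (card_le_univ _) h2
  exact Nat.sInf_le huniv

lemma pdRad_le_pdRadS {S : Finset V} (hS : IsPDS G S) (hc : S.card = pdNum G) :
    pdRad G ≤ pdRadS G S :=
  Nat.sInf_le ⟨S, hS, hc, rfl⟩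

lemma closedNbhd_insert (u : V) (X : Finset V) :
    closedNbhd G (insert u X) = Nv G u ∪ closedNbhd G X := by
  rw [insert_eq, closedNbhd_union]

lemma cardU (A B : Finset V) : (A ∪ B).card = A.card + (B \ A).card := by
  rw [← card_union_of_disjoint (disjoint_sdiff : Disjoint A (B \ A)),
    union_sdiff_self_eq_union]

/-- `N[S \ {v}]`. -/
noncomputable def Mv (G : SimpleGraph V) (S : Finset V) (v : V) : Finset V :=
  closedNbhd G (S.erase v)

/-- The private closed neighbourhood of `v` w.r.t. `S` (may contain `v`). -/
noncomputable def pv (G : SimpleGraph V) (S : Finset V) (v : V) : Finset V :=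
  Nv G v \ Mv G S v

/-- The external private neighbours of `v` w.r.t. `S`. -/
noncomputable def epn (G : SimpleGraph V) (S : Finset V) (v : V) : Finset V :=
  (pv G S v).erase v

variable {S : Finset V}

lemma Mv_def (v : V) : Mv G S v = closedNbhd G (S.erase v) := rfl

lemma Nb_eq_Mv_union (v : V) (hv : v ∈ S) :
    closedNbhd G S = Mv G S v ∪ Nv G v := closedNbhd_erase G S v hv

lemma Nv_subset_Mv {u v : V} (hu : u ∈ S) (huv : u ≠ v) :
    Nv G u ⊆ Mv G S v :=
  Nv_subset G (mem_erase.2 ⟨huv, hu⟩)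

lemma epn_subset_pv (v : V) : epn G S v ⊆ pv G S v := erase_subset _ _

lemma epn_subset_nbr (v : V) : epn G S v ⊆ G.neighborFinset v := by
  intro x hx
  rw [epn, mem_erase, pv, mem_sdiff, mem_Nv] at hx
  rcases hx.2.1 with rfl | hadj
  · exact absurd rfl hx.1
  · rwa [SimpleGraph.mem_neighborFinset]

lemma epn_subset_Nv (v : V) : epn G S v ⊆ Nv G v :=
  (epn_subset_pv G v).trans sdiff_subset

lemma epn_subset_Nb (v : V) (hv : v ∈ S) : epn G S v ⊆ closedNbhd G S :=
  (epn_subset_Nv G v).trans (Nv_subset G hv)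

lemma not_mem_Mv_of_mem_pv {v x : V} (hx : x ∈ pv G S v) : x ∉ Mv G S v :=
  (mem_sdiff.1 hx).2

lemma epn_disj_of_subset_Mv {X : Finset V} {u : V} (h : X ⊆ Mv G S u) :
    Disjoint X (epn G S u) := by
  rw [disjoint_left]
  intro a ha hae
  exact not_mem_Mv_of_mem_pv G (epn_subset_pv G u hae) (h ha)

lemma epn_pairwise_disj {x y : V} (hx : x ∈ S) (hxy : x ≠ y) :
    Disjoint (epn G S x) (epn G S y) :=
  epn_disj_of_subset_Mv G ((epn_subset_Nv G x).trans (Nv_subset_Mv G hx hxy))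

lemma epn_disj_S (v : V) : Disjoint (epn G S v) S := by
  rw [disjoint_left]
  intro a ha haS
  have hav : a ≠ v := by
    intro h; subst h; exact notMem_erase a _ ha
  have : a ∈ Mv G S v := subset_closedNbhd G _ (mem_erase.2 ⟨hav, haS⟩)
  exact not_mem_Mv_of_mem_pv G (epn_subset_pv G v ha) this

/-- The master counting lemma. -/
lemma count_master (S' Y : Finset V) (hS' : S' ⊆ S) (hY : Y ⊆ closedNbhd G S)
    (hYS : Disjoint Y S) (hYe : ∀ v ∈ S', Disjoint Y (epn G S v)) :
    S.card + (∑ v ∈ S', (epn G S v).card) + Y.card ≤ (closedNbhd G S).card := by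
  classical
  set E := S'.biUnion (fun v => epn G S v) with hE
  have hEcard : E.card = ∑ v ∈ S', (epn G S v).card := by
    apply card_biUnion
    intro x hx y hy hxy
    exact epn_pairwise_disj G (hS' hx) hxy
  have hdSE : Disjoint S E := by
    rw [disjoint_right, hE]
    intro a ha haS
    obtain ⟨v, hv, hav⟩ := mem_biUnion.1 ha
    exact (disjoint_left.1 (epn_disj_S G v)) hav haS
  have hdY : Disjoint (S ∪ E) Y := by
    rw [disjoint_union_left]
    refine ⟨hYS.symm, ?_⟩
    rw [disjoint_left, hE]
    intro a ha haY
    obtain ⟨v, hv, hav⟩ := mem_biUnion.1 ha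
    exact (disjoint_left.1 (hYe v hv)) haY hav
  have hsub : S ∪ E ∪ Y ⊆ closedNbhd G S := by
    refine union_subset (union_subset (subset_closedNbhd G S) ?_) hY
    rw [hE, biUnion_subset]
    intro v hv
    exact epn_subset_Nb G v (hS' hv)
  calc S.card + (∑ v ∈ S', (epn G S v).card) + Y.card
      = (S ∪ E ∪ Y).card := by
        rw [card_union_of_disjoint hdY, card_union_of_disjoint hdSE, hEcard]
    _ ≤ (closedNbhd G S).card := card_le_card hsub

lemma cover_two_step {T W : Finset V}
    (hW : ∀ w ∈ W, w ∈ closedNbhd G T ∧ (G.neighborFinset w \ closedNbhd G T).card ≤ 1)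
    (hcov : closedNbhd G S ⊆ closedNbhd G T ∪ W.biUnion (fun w => Nv G w)) :
    closedNbhd G S ⊆ pdSeq G T 2 := by
  rw [pdSeq_two]
  refine hcov.trans (union_subset (subset_pdStep G _) ?_)
  rw [biUnion_subset]
  intro w hw
  exact propagate G (hW w hw).1 (hW w hw).2

lemma exchange {T W : Finset V} (hS : IsPDS G S)
    (hW : ∀ w ∈ W, w ∈ closedNbhd G T ∧ (G.neighborFinset w \ closedNbhd G T).card ≤ 1)
    (hcov : closedNbhd G S ⊆ closedNbhd G T ∪ W.biUnion (fun w => Nv G w)) :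
    IsPDS G T :=
  transfer G hS (cover_two_step G hW hcov)

section Core

variable {G} (hS : IsPDS G S) (hcard : S.card = pdNum G)
  (hmax : ∀ T, IsPDS G T → T.card = pdNum G → (closedNbhd G T).card ≤ (closedNbhd G S).card)
  (hdelta : 2 ≤ G.minDegree) (hgamma : 3 ≤ pdNum G)

include hS hcard hgamma

lemma erase_not_pds (v : V) (hv : v ∈ S) : ¬ IsPDS G (S.erase v) := by
  intro h
  have := pdNum_le_card G h
  rw [card_erase_of_mem hv, hcard] at this
  have h1 : 1 ≤ S.card := by rw [hcard]; omega
  rw [hcard] at h1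
  omega

include hmax hdelta

lemma pv_card_two : ∀ v ∈ S, 2 ≤ (pv G S v).card := by
  intro v hv
  by_contra hlt
  push_neg at hlt
  have hpv1 : (pv G S v).card ≤ 1 := by omega
  have hMvNb : closedNbhd G S = Mv G S v ∪ Nv G v := Nb_eq_Mv_union G v hv
  have hdeg2 : 2 ≤ G.degree v := le_trans hdelta (G.minDegree_le_degree v)
  by_cases hvM : v ∈ Mv G S v
  · -- v is dominated by the rest: S.erase v is a PDS, contradiction
    have hN1 : (G.neighborFinset v \ Mv G S v).card ≤ 1 := by
      refine le_trans (card_le_card ?_) hpv1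
      intro z hz
      rw [mem_sdiff] at hz
      exact mem_sdiff.2 ⟨neighborFinset_subset_Nv G v hz.1, hz.2⟩
    refine erase_not_pds hS hcard hgamma v hv ?_
    refine exchange G hS (T := S.erase v) (W := {v}) ?_ ?_
    · intro w hw
      rw [mem_singleton] at hw
      rw [hw]
      exact ⟨hvM, hN1⟩
    · rw [singleton_biUnion, hMvNb]
      exact subset_refl _
  · -- v is not dominated by the rest
    have hvpv : v ∈ pv G S v := mem_sdiff.2 ⟨self_mem_Nv G v, hvM⟩
    have hpv_eq : pv G S v = {v} := by
      apply Finset.eq_singleton_iff_unique_mem.2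
      exact ⟨hvpv, fun x hx => card_le_one.1 hpv1 x hx v hvpv⟩
    have hNsub : G.neighborFinset v ⊆ Mv G S v := by
      intro z hz
      by_contra hzM
      have hzpv : z ∈ pv G S v := mem_sdiff.2 ⟨neighborFinset_subset_Nv G v hz, hzM⟩
      rw [hpv_eq, mem_singleton] at hzpv
      subst hzpv
      exact G.irrefl ((SimpleGraph.mem_neighborFinset _ _ _).1 hz)
    have hNne : (G.neighborFinset v).Nonempty := by
      rw [← card_pos]
      have : G.degree v = (G.neighborFinset v).card := rfl
      omega
    obtain ⟨u, hu⟩ := hNne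
    have huadj : G.Adj v u := (SimpleGraph.mem_neighborFinset _ _ _).1 hu
    have huM : u ∈ Mv G S v := hNsub hu
    have huS : u ∉ S := by
      intro huS
      have huv : u ≠ v := fun h => G.irrefl (h ▸ huadj)
      exact hvM (Nv_subset_Mv G huS huv (nbr_mem_Nv G huadj.symm))
    set T2 := insert u (S.erase v) with hT2
    have hT2c : T2.card = pdNum G := by
      rw [hT2, card_insert_of_notMem (fun h => huS (mem_of_mem_erase h)),
        card_erase_of_mem hv, hcard]
      omega
    have hT2Nb : closedNbhd G T2 = Mv G S v ∪ Nv G u := by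
      rw [hT2, closedNbhd_insert, union_comm]
      rfl
    have hT2P : IsPDS G T2 := by
      refine exchange G hS (T := T2) (W := {v}) ?_ ?_
      · intro w hw
        rw [mem_singleton] at hw
        rw [hw]
        constructor
        · rw [hT2Nb]
          exact mem_union_right _ (nbr_mem_Nv G huadj.symm)
        · have : G.neighborFinset v \ closedNbhd G T2 = ∅ := by
            rw [eq_empty_iff_forall_notMem]
            intro z hz
            rw [mem_sdiff] at hz
            exact hz.2 (by rw [hT2Nb]; exact mem_union_left _ (hNsub hz.1))
          rw [this]
          simp
      · rw [singleton_biUnion, hMvNb]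
        exact union_subset (fun z hz => mem_union_left _ (by rw [hT2Nb]; exact mem_union_left _ hz))
          (fun z hz => mem_union_right _ hz)
    have hle := hmax T2 hT2P hT2c
    have h1 : (closedNbhd G S).card = (Mv G S v).card + 1 := by
      rw [hMvNb, cardU]
      have : Nv G v \ Mv G S v = pv G S v := rfl
      rw [this, hpv_eq, card_singleton]
    have h2 : (closedNbhd G T2).card = (Mv G S v).card + (Nv G u \ Mv G S v).card := by
      rw [hT2Nb, cardU]
    have hvNu : v ∈ Nv G u \ Mv G S v := mem_sdiff.2 ⟨nbr_mem_Nv G huadj.symm, hvM⟩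
    have hNuEq : Nv G u \ Mv G S v = {v} := by
      apply Finset.eq_singleton_iff_unique_mem.2
      refine ⟨hvNu, fun x hx => ?_⟩
      have hcle : (Nv G u \ Mv G S v).card ≤ 1 := by omega
      exact card_le_one.1 hcle x hx v hvNu
    have hNu1 : (G.neighborFinset u \ Mv G S v).card ≤ 1 := by
      have hsub : G.neighborFinset u \ Mv G S v ⊆ Nv G u \ Mv G S v :=
        sdiff_subset_sdiff (neighborFinset_subset_Nv G u) (subset_refl _)
      calc (G.neighborFinset u \ Mv G S v).card ≤ (Nv G u \ Mv G S v).card :=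
            card_le_card hsub
        _ = 1 := by rw [hNuEq, card_singleton]
    refine erase_not_pds hS hcard hgamma v hv ?_
    refine exchange G hT2P (T := S.erase v) (W := {u}) ?_ ?_
    · intro w hw
      rw [mem_singleton] at hw
      rw [hw]
      exact ⟨huM, hNu1⟩
    · rw [singleton_biUnion, hT2Nb]
      exact subset_refl _

lemma epn_card_lb : ∀ v ∈ S, 1 ≤ (epn G S v).card := by
  intro v hv
  have h2 := pv_card_two hS hcard hmax hdelta hgamma v hv
  by_cases hvM : v ∈ Mv G S v
  · have hvpv : v ∉ pv G S v := fun h => not_mem_Mv_of_mem_pv G h hvM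
    rw [epn, erase_eq_of_notMem hvpv]
    omega
  · have hvpv : v ∈ pv G S v := mem_sdiff.2 ⟨self_mem_Nv G v, hvM⟩
    rw [epn, card_erase_of_mem hvpv]
    omega

lemma epn_card_lb2 : ∀ v ∈ S, v ∈ Mv G S v → 2 ≤ (epn G S v).card := by
  intro v hv hvM
  have h2 := pv_card_two hS hcard hmax hdelta hgamma v hv
  have hvpv : v ∉ pv G S v := fun h => not_mem_Mv_of_mem_pv G h hvM
  rw [epn, erase_eq_of_notMem hvpv]
  exact h2

omit hS hcard hmax hdelta hgamma

/-- non-private neighbours. -/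
noncomputable def Af (G : SimpleGraph V) (S : Finset V) (v : V) : Finset V :=
  G.neighborFinset v \ epn G S v

lemma Af_subset_Mv (v : V) : Af G S v ⊆ Mv G S v := by
  intro z hz
  rw [Af, mem_sdiff, SimpleGraph.mem_neighborFinset] at hz
  by_contra hzM
  have hzv : z ≠ v := fun h => G.irrefl (h ▸ hz.1)
  exact hz.2 (mem_erase.2 ⟨hzv, mem_sdiff.2 ⟨nbr_mem_Nv G hz.1, hzM⟩⟩)

lemma nbr_disj_S {v : V} (hv : v ∈ S) (hvM : v ∉ Mv G S v) :
    Disjoint (G.neighborFinset v) S := by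
  rw [disjoint_left]
  intro z hz hzS
  have hadj : G.Adj v z := (SimpleGraph.mem_neighborFinset _ _ _).1 hz
  have hzv : z ≠ v := fun h => G.irrefl (h ▸ hadj)
  exact hvM (Nv_subset_Mv G hzS hzv (nbr_mem_Nv G hadj.symm))

lemma nbr_disj_epn {v u : V} (hv : v ∈ S) (hvu : v ≠ u) :
    Disjoint (G.neighborFinset v) (epn G S u) :=
  epn_disj_of_subset_Mv G
    ((neighborFinset_subset_Nv G v).trans (Nv_subset_Mv G hv hvu))

lemma Af_disj_epn {v u : V} (hv : v ∈ S) :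
    Disjoint (Af G S v) (epn G S u) := by
  by_cases huv : v = u
  · subst huv
    exact sdiff_disjoint
  · exact disjoint_of_subset_left (sdiff_subset) (nbr_disj_epn hv huv)

include hS hcard hmax hdelta hgamma

/-- Deficient vertices: at most one external private neighbour. -/
lemma D_props {v : V} (hv : v ∈ S) (h1 : (epn G S v).card ≤ 1) :
    v ∉ Mv G S v ∧ (epn G S v).card = 1 := by
  constructor
  · intro hvM
    have := epn_card_lb2 hS hcard hmax hdelta hgamma v hv hvM
    omega
  · have := epn_card_lb hS hcard hmax hdelta hgamma v hv
    omega

lemma Af_card_lb {v : V} (hv : v ∈ S) (h1 : (epn G S v).card ≤ 1) :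
    1 ≤ (Af G S v).card := by
  have hdeg2 : 2 ≤ G.degree v := le_trans hdelta (G.minDegree_le_degree v)
  have hd : G.degree v = (G.neighborFinset v).card := rfl
  have := Finset.le_card_sdiff (epn G S v) (G.neighborFinset v)
  rw [Af]
  omega

/-- The 3γ bound. -/
lemma count3 : 3 * pdNum G ≤ (closedNbhd G S).card := by
  classical
  set D := S.filter (fun v => (epn G S v).card ≤ 1) with hD
  have hDsub : D ⊆ S := filter_subset _ _
  have hmemD : ∀ v ∈ D, v ∈ S ∧ (epn G S v).card ≤ 1 := by
    intro v hv; exact mem_filter.1 hv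
  set t : {x // x ∈ D} → Finset V := fun x => Af G S x.1 with ht
  by_cases hHall : ∀ (s : Finset {x // x ∈ D}), s.card ≤ (s.biUnion t).card
  · obtain ⟨f, hfinj, hfm⟩ := (Finset.all_card_le_biUnion_card_iff_exists_injective t).1 hHall
    set I : Finset V := (univ : Finset {x // x ∈ D}).image f with hI
    have hIcard : I.card = D.card := by
      rw [hI, card_image_of_injective _ hfinj, card_univ, Fintype.card_coe]
    have hImem : ∀ z ∈ I, ∃ x : {x // x ∈ D}, f x = z := by
      intro z hz
      obtain ⟨x, _, hxz⟩ := mem_image.1 hz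
      exact ⟨x, hxz⟩
    have hcm := count_master G S I (subset_refl S) ?_ ?_ ?_
    rotate_left
    · intro z hz
      obtain ⟨x, rfl⟩ := hImem z hz
      have : f x ∈ Af G S x.1 := hfm x
      exact Nv_subset G (hDsub x.2) (neighborFinset_subset_Nv G _ (sdiff_subset this))
    · rw [disjoint_left]
      intro z hz hzS
      obtain ⟨x, rfl⟩ := hImem z hz
      have hfx : f x ∈ Af G S x.1 := hfm x
      have hxD := hmemD _ x.2
      have hnM := (D_props hS hcard hmax hdelta hgamma hxD.1 hxD.2).1
      exact (disjoint_left.1 (nbr_disj_S hxD.1 hnM)) (sdiff_subset hfx) hzS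
    · intro v hv
      rw [disjoint_left]
      intro z hz hze
      obtain ⟨x, rfl⟩ := hImem z hz
      exact (disjoint_left.1 (Af_disj_epn (hDsub x.2))) (hfm x) hze
    -- now the sum bound
    have hsum : 2 * S.card ≤ (∑ v ∈ S, (epn G S v).card) + D.card := by
      have h1 : ∀ v ∈ S, 2 ≤ (epn G S v).card + (if v ∈ D then 1 else 0) := by
        intro v hv
        by_cases hvD : v ∈ D
        · simp only [hvD, if_true]
          have := epn_card_lb hS hcard hmax hdelta hgamma v hv
          omega
        · simp only [hvD, if_false]
          have h2 : ¬ ((epn G S v).card ≤ 1) := fun hc => hvD (mem_filter.2 ⟨hv, hc⟩)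
          omega
      have hfe : S.filter (fun v => v ∈ D) = D := by
        ext z
        rw [mem_filter]
        exact ⟨fun h => h.2, fun h => ⟨hDsub h, h⟩⟩
      calc 2 * S.card = ∑ _v ∈ S, 2 := by rw [sum_const, smul_eq_mul, mul_comm]
        _ ≤ ∑ v ∈ S, ((epn G S v).card + if v ∈ D then 1 else 0) := sum_le_sum h1
        _ = (∑ v ∈ S, (epn G S v).card) + ∑ v ∈ S, (if v ∈ D then 1 else 0) :=
            sum_add_distrib
        _ = (∑ v ∈ S, (epn G S v).card) + D.card := by
            rw [← card_filter, hfe]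
    rw [hcard] at hsum hcm
    rw [hIcard] at hcm
    omega
  · push_neg at hHall
    obtain ⟨s, hs⟩ := hHall
    set F : Finset V := s.image Subtype.val with hF
    have hFD : F ⊆ D := by
      intro w hw
      obtain ⟨x, _, hxw⟩ := mem_image.1 hw
      exact hxw ▸ x.2
    have hFS : F ⊆ S := hFD.trans hDsub
    have hFcard : F.card = s.card := card_image_of_injective _ Subtype.val_injective
    set U0 : Finset V := s.biUnion t with hU0
    set S' : Finset V := (S \ F) ∪ U0 with hS'
    have hS'card : S'.card < pdNum G := by
      have h1 : S'.card ≤ (S \ F).card + U0.card := card_union_le _ _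
      have h2 : (S \ F).card = S.card - F.card := card_sdiff_of_subset hFS
      have h3 : F.card ≤ S.card := card_le_card hFS
      have h4 : 1 ≤ F.card := by
        rw [hFcard]
        have : U0.card < s.card := hs
        omega
      rw [hcard] at *
      omega
    have hU0S' : U0 ⊆ S' := subset_union_right
    have hS'P : IsPDS G S' := by
      refine exchange G hS (T := S') (W := F) ?_ ?_
      · intro w hw
        obtain ⟨x, hxs, hxw⟩ := mem_image.1 hw
        have hwD : w ∈ D := hFD hw
        have hwS : w ∈ S := hDsub hwD
        have hwd := hmemD w hwD
        have hAfw : (Af G S w).Nonempty := by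
          rw [← card_pos]
          have := Af_card_lb hS hcard hmax hdelta hgamma hwd.1 hwd.2
          omega
        obtain ⟨u, hu⟩ := hAfw
        have huU0 : u ∈ U0 := by
          rw [hU0]
          refine mem_biUnion.2 ⟨x, hxs, ?_⟩
          rw [ht]
          simpa [hxw] using hu
        have huNb : u ∈ closedNbhd G S' := subset_closedNbhd G S' (hU0S' huU0)
        have hadj : G.Adj w u := (SimpleGraph.mem_neighborFinset _ _ _).1 (sdiff_subset hu)
        constructor
        · exact Nv_subset G (hU0S' huU0) (nbr_mem_Nv G hadj.symm)
        · have hsub : G.neighborFinset w \ closedNbhd G S' ⊆ epn G S w := by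
            intro z hz
            rw [mem_sdiff] at hz
            by_contra hze
            have : z ∈ Af G S w := mem_sdiff.2 ⟨hz.1, hze⟩
            have : z ∈ U0 := by
              rw [hU0]
              refine mem_biUnion.2 ⟨x, hxs, ?_⟩
              rw [ht]
              simpa [hxw] using this
            exact hz.2 (subset_closedNbhd G S' (hU0S' this))
          calc (G.neighborFinset w \ closedNbhd G S').card ≤ (epn G S w).card :=
              card_le_card hsub
            _ ≤ 1 := hwd.2
      · rw [closedNbhd_sdiff G S F hFS]
        exact union_subset
          (fun z hz => mem_union_left _ (closedNbhd_mono G subset_union_left hz))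
          (fun z hz => mem_union_right _ hz)
    have := pdNum_le_card G hS'P
    omega

omit hS hcard hmax hdelta hgamma in
lemma three_mem (h3 : 3 ≤ S.card) :
    ∃ v₁ ∈ S, ∃ v₂ ∈ S, ∃ v₃ ∈ S, v₁ ≠ v₂ ∧ v₁ ≠ v₃ ∧ v₂ ≠ v₃ := by
  obtain ⟨v₁, h1⟩ := card_pos.1 (show 0 < S.card by omega)
  have e1 : 1 ≤ (S.erase v₁).card := by
    rw [card_erase_of_mem h1]; omega
  obtain ⟨v₂, h2⟩ := card_pos.1 (show 0 < (S.erase v₁).card by omega)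
  have e2 : 1 ≤ ((S.erase v₁).erase v₂).card := by
    rw [card_erase_of_mem h2, card_erase_of_mem h1]; omega
  obtain ⟨v₃, h3'⟩ := card_pos.1 (show 0 < ((S.erase v₁).erase v₂).card by omega)
  refine ⟨v₁, h1, v₂, mem_of_mem_erase h2, v₃, mem_of_mem_erase (mem_of_mem_erase h3'),
    ?_, ?_, ?_⟩
  · exact fun h => (mem_erase.1 h2).1 h.symm
  · exact fun h => (mem_erase.1 (mem_of_mem_erase h3')).1 h.symm
  · exact fun h => (mem_erase.1 h3').1 h.symm

/-- external non-private, non-`S` neighbours. -/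
noncomputable def Wv (G : SimpleGraph V) (S : Finset V) (v : V) : Finset V :=
  G.neighborFinset v \ (S ∪ epn G S v)

omit hS hcard hmax hdelta hgamma in
lemma Wv_def (v : V) : Wv G S v = G.neighborFinset v \ (S ∪ epn G S v) := rfl

/-- The 2γ + δ bound. -/
lemma countD (hγδ : pdNum G < G.minDegree) :
    2 * pdNum G + G.minDegree ≤ (closedNbhd G S).card := by
  classical
  set γ := pdNum G with hγ
  set δ := G.minDegree with hδ
  have hdeg : ∀ v, δ ≤ G.degree v := fun v => G.minDegree_le_degree v
  have hdegc : ∀ v, G.degree v = (G.neighborFinset v).card := fun v => rfl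
  have hepn1 : ∀ v ∈ S, 1 ≤ (epn G S v).card :=
    epn_card_lb hS hcard hmax hdelta hgamma
  set D := S.filter (fun v => (epn G S v).card ≤ 1) with hD
  have hDsub : D ⊆ S := filter_subset _ _
  by_cases hDne : D.Nonempty
  · obtain ⟨v₁, hv₁D⟩ := hDne
    have hv₁S : v₁ ∈ S := hDsub hv₁D
    have hv₁p := D_props hS hcard hmax hdelta hgamma hv₁S (mem_filter.1 hv₁D).2
    by_cases hDS : D = S
    · -- every vertex of S is deficient
      have hall : ∀ v ∈ S, v ∉ Mv G S v ∧ (epn G S v).card = 1 := by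
        intro v hv
        exact D_props hS hcard hmax hdelta hgamma hv (mem_filter.1 (hDS ▸ hv : v ∈ D)).2
      by_cases hbig : ∃ w ∈ S, δ + 1 ≤ G.degree w
      · obtain ⟨w, hwS, hwdeg⟩ := hbig
        have hcm := count_master G (S.erase w) (G.neighborFinset w) (erase_subset _ _)
          (fun z hz => Nv_subset G hwS (neighborFinset_subset_Nv G _ hz))
          (nbr_disj_S hwS (hall w hwS).1)
          (fun v hv => nbr_disj_epn hwS (fun h => (mem_erase.1 hv).1 h.symm))
        have hsumlb := Finset.card_nsmul_le_sum (S.erase w)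
          (fun v => (epn G S v).card) 1 (fun x hx => hepn1 x (mem_of_mem_erase hx))
        simp only [smul_eq_mul, mul_one] at hsumlb
        rw [card_erase_of_mem hwS] at hsumlb
        rw [← hdegc w] at hcm
        rw [hcard] at *
        omega
      · push_neg at hbig
        by_cases hsep : ∃ w ∈ S, ∃ v ∈ S.erase w, ¬ (Af G S v ⊆ Nv G w)
        · obtain ⟨w, hwS, v, hvE, hnsub⟩ := hsep
          have hvS : v ∈ S := mem_of_mem_erase hvE
          obtain ⟨u, huA, huN⟩ := not_subset.1 hnsub
          have huNb : u ∈ G.neighborFinset v := sdiff_subset huA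
          have hYsub : insert u (G.neighborFinset w) ⊆ closedNbhd G S := by
            refine insert_subset ?_
              (fun z hz => Nv_subset G hwS (neighborFinset_subset_Nv G _ hz))
            exact Nv_subset G hvS (neighborFinset_subset_Nv G _ huNb)
          have hYS : Disjoint (insert u (G.neighborFinset w)) S := by
            rw [insert_eq, disjoint_union_left]
            constructor
            · rw [disjoint_singleton_left]
              exact fun hus => (disjoint_left.1 (nbr_disj_S hvS (hall v hvS).1)) huNb hus
            · exact nbr_disj_S hwS (hall w hwS).1
          have hYe : ∀ x ∈ S.erase w, Disjoint (insert u (G.neighborFinset w)) (epn G S x) := by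
            intro x hx
            rw [insert_eq, disjoint_union_left]
            constructor
            · rw [disjoint_singleton_left]
              exact fun hue => (disjoint_left.1 (Af_disj_epn hvS)) huA hue
            · exact nbr_disj_epn hwS (fun h => (mem_erase.1 hx).1 h.symm)
          have hcm := count_master G (S.erase w) (insert u (G.neighborFinset w))
            (erase_subset _ _) hYsub hYS hYe
          have hsumlb := Finset.card_nsmul_le_sum (S.erase w)
            (fun v => (epn G S v).card) 1 (fun x hx => hepn1 x (mem_of_mem_erase hx))
          simp only [smul_eq_mul, mul_one] at hsumlb
          rw [card_erase_of_mem hwS] at hsumlb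
          have hYcard : (insert u (G.neighborFinset w)).card = G.degree w + 1 := by
            rw [card_insert_of_notMem (fun h => huN (neighborFinset_subset_Nv G _ h)), hdegc]
          rw [hYcard] at hcm
          have hwdeg := hdeg w
          rw [hcard] at *
          omega
        · -- shrink contradiction
          push_neg at hsep
          have h3 : 3 ≤ S.card := by rw [hcard]; exact hgamma
          obtain ⟨w₁, hw1, w₂, hw2, w₃, hw3, h12, h13, h23⟩ := three_mem h3
          have hAf3 : (Af G S w₃).Nonempty := by
            rw [← card_pos]
            have := Af_card_lb hS hcard hmax hdelta hgamma hw3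
              (mem_filter.1 (hDS ▸ hw3 : w₃ ∈ D)).2
            omega
          obtain ⟨u, huA⟩ := hAf3
          have huS : u ∉ S := fun huS =>
            (disjoint_left.1 (nbr_disj_S hw3 (hall w₃ hw3).1)) (sdiff_subset huA) huS
          have huNv : ∀ x ∈ S, x ≠ w₃ → u ∈ Nv G x := by
            intro x hx hxne
            exact hsep x hx w₃ (mem_erase.2 ⟨fun h => hxne h.symm, hw3⟩) huA
          have huadj : ∀ x ∈ S, x ≠ w₃ → G.Adj x u := by
            intro x hx hxne
            rcases (mem_Nv G).1 (huNv x hx hxne) with h | h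
            · exact absurd h.symm (fun hh => huS (hh ▸ hx))
            · exact h
          set P : Finset V := {w₁, w₂} with hP
          have hPS : P ⊆ S := by
            rw [hP, insert_subset_iff, singleton_subset_iff]
            exact ⟨hw1, hw2⟩
          have hPcard : P.card = 2 := by
            rw [hP, card_insert_of_notMem (by rwa [mem_singleton]), card_singleton]
          set S'' : Finset V := insert u (S \ P) with hS''
          have hS''card : S''.card < γ := by
            have h1 : S''.card ≤ (S \ P).card + 1 := card_insert_le _ _
            have h2 : (S \ P).card = S.card - P.card := card_sdiff_of_subset hPS
            rw [hcard, hPcard] at h2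
            omega
          have hSsub : S \ P ⊆ S'' := subset_insert _ _
          have hw₃P : w₃ ∈ S \ P := by
            rw [mem_sdiff, hP, mem_insert, mem_singleton]
            exact ⟨hw3, by tauto⟩
          have hS''P : IsPDS G S'' := by
            refine exchange G hS (T := S'') (W := P) ?_ ?_
            · intro x hx
              have hxS : x ∈ S := hPS hx
              have hxne3 : x ≠ w₃ := by
                rw [hP, mem_insert, mem_singleton] at hx
                rcases hx with rfl | rfl
                · exact h13
                · exact h23
              constructor
              · exact Nv_subset G (mem_insert_self u _)
                  (nbr_mem_Nv G (huadj x hxS hxne3).symm)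
              · have hsub : G.neighborFinset x \ closedNbhd G S'' ⊆ epn G S x := by
                  intro z hz
                  rw [mem_sdiff] at hz
                  by_contra hze
                  have hzA : z ∈ Af G S x := mem_sdiff.2 ⟨hz.1, hze⟩
                  have : z ∈ Nv G w₃ :=
                    hsep w₃ hw3 x (mem_erase.2 ⟨hxne3, hxS⟩) hzA
                  exact hz.2 (closedNbhd_mono G hSsub (Nv_subset G hw₃P this))
                calc (G.neighborFinset x \ closedNbhd G S'').card
                    ≤ (epn G S x).card := card_le_card hsub
                  _ ≤ 1 := (hall x hxS).2.le
            · rw [closedNbhd_sdiff G S P hPS]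
              exact union_subset
                (fun z hz => mem_union_left _ (closedNbhd_mono G hSsub hz))
                (fun z hz => mem_union_right _ hz)
          have := pdNum_le_card G hS''P
          omega
    · -- D is a proper nonempty subset of S
      have hDlt : D.card < S.card :=
        card_lt_card (Finset.ssubset_iff_subset_ne.2 ⟨hDsub, hDS⟩)
      have hcm := count_master G (S.erase v₁) (G.neighborFinset v₁) (erase_subset _ _)
        (fun z hz => Nv_subset G hv₁S (neighborFinset_subset_Nv G _ hz))
        (nbr_disj_S hv₁S hv₁p.1)
        (fun v hv => nbr_disj_epn hv₁S (fun h => (mem_erase.1 hv).1 h.symm))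
      -- refined sum bound over S.erase v₁
      have hsum : 2 * (S.erase v₁).card ≤
          (∑ v ∈ S.erase v₁, (epn G S v).card) + (D.erase v₁).card := by
        have h1 : ∀ v ∈ S.erase v₁, 2 ≤ (epn G S v).card + (if v ∈ D then 1 else 0) := by
          intro v hv
          have hvS : v ∈ S := mem_of_mem_erase hv
          by_cases hvD : v ∈ D
          · simp only [hvD, if_true]
            have := hepn1 v hvS
            omega
          · simp only [hvD, if_false]
            have h2 : ¬ ((epn G S v).card ≤ 1) := fun hc => hvD (mem_filter.2 ⟨hvS, hc⟩)
            omega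
        have hfe : (S.erase v₁).filter (fun v => v ∈ D) = D.erase v₁ := by
          ext z
          rw [mem_filter, mem_erase, mem_erase]
          constructor
          · rintro ⟨⟨hz1, _⟩, hz2⟩
            exact ⟨hz1, hz2⟩
          · rintro ⟨hz1, hz2⟩
            exact ⟨⟨hz1, hDsub hz2⟩, hz2⟩
        calc 2 * (S.erase v₁).card = ∑ _v ∈ S.erase v₁, 2 := by
              rw [sum_const, smul_eq_mul, mul_comm]
          _ ≤ ∑ v ∈ S.erase v₁, ((epn G S v).card + if v ∈ D then 1 else 0) :=
              sum_le_sum h1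
          _ = (∑ v ∈ S.erase v₁, (epn G S v).card) +
              ∑ v ∈ S.erase v₁, (if v ∈ D then 1 else 0) := sum_add_distrib
          _ = (∑ v ∈ S.erase v₁, (epn G S v).card) + (D.erase v₁).card := by
              rw [← card_filter, hfe]
      have hDe : (D.erase v₁).card = D.card - 1 := card_erase_of_mem hv₁D
      have hSe : (S.erase v₁).card = S.card - 1 := card_erase_of_mem hv₁S
      have hdegv₁ := hdeg v₁
      rw [← hdegc v₁] at hcm
      rw [hcard] at *
      omega
  · -- D is empty : every vertex has at least 2 external private neighbours
    have hepn2 : ∀ v ∈ S, 2 ≤ (epn G S v).card := by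
      intro v hv
      by_contra h
      push_neg at h
      exact hDne ⟨v, mem_filter.2 ⟨hv, by omega⟩⟩
    have hSne : S.Nonempty := card_pos.1 (by rw [hcard]; omega)
    have hsum2 : ∀ w : V, (S.erase w).card • 2 ≤ ∑ v ∈ S.erase w, (epn G S v).card :=
      fun w => Finset.card_nsmul_le_sum _ _ _ (fun x hx => hepn2 x (mem_of_mem_erase hx))
    by_cases hBne : ∃ w ∈ S, w ∉ Mv G S w
    · obtain ⟨w, hwS, hwM⟩ := hBne
      have hcm := count_master G (S.erase w) (G.neighborFinset w) (erase_subset _ _)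
        (fun z hz => Nv_subset G hwS (neighborFinset_subset_Nv G _ hz))
        (nbr_disj_S hwS hwM)
        (fun v hv => nbr_disj_epn hwS (fun h => (mem_erase.1 hv).1 h.symm))
      have hsw := hsum2 w
      simp only [smul_eq_mul] at hsw
      rw [card_erase_of_mem hwS] at hsw
      have hdw := hdeg w
      rw [← hdegc w] at hcm
      rw [hcard] at *
      omega
    · push_neg at hBne
      by_cases hclq : ∃ p ∈ S, ∃ q ∈ S, q ∉ Nv G p
      · obtain ⟨p, hpS, q, hqS, hqN⟩ := hclq
        have hcm := count_master G (S.erase p) (Nv G p \ S) (erase_subset _ _)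
          (fun z hz => Nv_subset G hpS (mem_sdiff.1 hz).1)
          sdiff_disjoint
          (fun v hv => epn_disj_of_subset_Mv G
            (sdiff_subset.trans (Nv_subset_Mv G hpS (fun h => (mem_erase.1 hv).1 h.symm))))
        have hci : (Nv G p \ S).card + (Nv G p ∩ S).card = G.degree p + 1 := by
          rw [card_sdiff_add_card_inter, card_Nv]
        have hqe : (Nv G p ∩ S).card ≤ S.card - 1 := by
          have hsub : Nv G p ∩ S ⊆ S.erase q := by
            intro z hz
            rw [mem_inter] at hz
            exact mem_erase.2 ⟨fun h => hqN (h ▸ hz.1), hz.2⟩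
          calc (Nv G p ∩ S).card ≤ (S.erase q).card := card_le_card hsub
            _ = S.card - 1 := card_erase_of_mem hqS
        have hsw := hsum2 p
        simp only [smul_eq_mul] at hsw
        rw [card_erase_of_mem hpS] at hsw
        have hdp := hdeg p
        rw [hcard] at *
        omega
      · push_neg at hclq
        by_cases hdb : ∃ p ∈ S, δ + 1 ≤ G.degree p
        · obtain ⟨p, hpS, hpd⟩ := hdb
          have hcm := count_master G (S.erase p) (Nv G p \ S) (erase_subset _ _)
            (fun z hz => Nv_subset G hpS (mem_sdiff.1 hz).1)
            sdiff_disjoint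
            (fun v hv => epn_disj_of_subset_Mv G
              (sdiff_subset.trans (Nv_subset_Mv G hpS (fun h => (mem_erase.1 hv).1 h.symm))))
          have hSin : Nv G p ∩ S = S := by
            apply inter_eq_right.2
            intro z hz
            exact hclq p hpS z hz
          have hci : (Nv G p \ S).card + (Nv G p ∩ S).card = G.degree p + 1 := by
            rw [card_sdiff_add_card_inter, card_Nv]
          have hSin' : (Nv G p ∩ S).card = S.card := by rw [hSin]
          have hsw := hsum2 p
          simp only [smul_eq_mul] at hsw
          rw [card_erase_of_mem hpS] at hsw
          rw [hcard] at *
          omega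
        · push_neg at hdb
          by_cases h3 : ∃ v ∈ S, 3 ≤ (epn G S v).card
          · obtain ⟨v, hvS, hv3⟩ := h3
            have hep : 1 ≤ (S.erase v).card := by
              rw [card_erase_of_mem hvS, hcard]; omega
            obtain ⟨p, hpE⟩ := card_pos.1 (show 0 < (S.erase v).card by omega)
            have hpS : p ∈ S := mem_of_mem_erase hpE
            have hpv : p ≠ v := (mem_erase.1 hpE).1
            have hcm := count_master G (S.erase p) (Nv G p \ S) (erase_subset _ _)
              (fun z hz => Nv_subset G hpS (mem_sdiff.1 hz).1)
              sdiff_disjoint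
              (fun w hw => epn_disj_of_subset_Mv G
                (sdiff_subset.trans (Nv_subset_Mv G hpS (fun h => (mem_erase.1 hw).1 h.symm))))
            have hSin : Nv G p ∩ S = S := by
              apply inter_eq_right.2
              intro z hz
              exact hclq p hpS z hz
            have hci : (Nv G p \ S).card + (Nv G p ∩ S).card = G.degree p + 1 := by
              rw [card_sdiff_add_card_inter, card_Nv]
            have hSin' : (Nv G p ∩ S).card = S.card := by rw [hSin]
            have hvE' : v ∈ S.erase p := mem_erase.2 ⟨fun h => hpv h.symm, hvS⟩
            have hsplit : (∑ w ∈ (S.erase p).erase v, (epn G S w).card) + (epn G S v).card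
                = ∑ w ∈ S.erase p, (epn G S w).card :=
              Finset.sum_erase_add (S.erase p) (fun w => (epn G S w).card) hvE'
            have hrest := Finset.card_nsmul_le_sum ((S.erase p).erase v)
              (fun w => (epn G S w).card) 2
              (fun x hx => hepn2 x (mem_of_mem_erase (mem_of_mem_erase hx)))
            simp only [smul_eq_mul] at hrest
            rw [card_erase_of_mem hvE', card_erase_of_mem hpS] at hrest
            have hdp := hdeg p
            rw [hcard] at *
            omega
          · push_neg at h3
            have hepn2e : ∀ v ∈ S, (epn G S v).card = 2 :=
              fun v hv => le_antisymm (by have := h3 v hv; omega) (hepn2 v hv)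
            -- the last corner: S is a clique, all degrees δ, all epn of size 2
            have hSnb : ∀ v ∈ S, S.erase v ⊆ G.neighborFinset v := by
              intro v hv z hz
              rcases (mem_Nv G).1 (hclq v hv z (mem_of_mem_erase hz)) with h | h
              · exact absurd h (mem_erase.1 hz).1
              · rwa [SimpleGraph.mem_neighborFinset]
            have hWc : ∀ v ∈ S, (Wv G S v).card + (γ + 1) = δ := by
              intro v hv
              have hie : G.neighborFinset v ∩ (S ∪ epn G S v) = S.erase v ∪ epn G S v := by
                ext z
                rw [mem_inter, mem_union, mem_union, mem_erase]
                constructor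
                · rintro ⟨hzN, hz | hz⟩
                  · refine Or.inl ⟨?_, hz⟩
                    intro h
                    rw [h] at hzN
                    exact G.irrefl ((SimpleGraph.mem_neighborFinset _ _ _).1 hzN)
                  · exact Or.inr hz
                · rintro (⟨hzv, hzS⟩ | hz)
                  · exact ⟨hSnb v hv (mem_erase.2 ⟨hzv, hzS⟩), Or.inl hzS⟩
                  · exact ⟨epn_subset_nbr G v hz, Or.inr hz⟩
              have hdj : Disjoint (S.erase v) (epn G S v) :=
                disjoint_of_subset_left (erase_subset _ _) (epn_disj_S G v).symm
              have h1 := card_sdiff_add_card_inter (G.neighborFinset v) (S ∪ epn G S v)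
              rw [hie, card_union_of_disjoint hdj, card_erase_of_mem hv,
                hepn2e v hv] at h1
              rw [Wv_def]
              have h2 := hdeg v
              have h3 := hdb v hv
              have h4 := hdegc v
              rw [hcard] at h1
              omega
            by_cases hWb : δ - γ ≤ (S.biUnion (fun v => Wv G S v)).card
            · have hcm := count_master G S (S.biUnion (fun v => Wv G S v))
                (subset_refl S) ?_ ?_ ?_
              rotate_left
              · intro z hz
                obtain ⟨v, hv, hzW⟩ := mem_biUnion.1 hz
                exact Nv_subset G hv (neighborFinset_subset_Nv G _ (sdiff_subset hzW))
              · rw [disjoint_left]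
                intro z hz hzS
                obtain ⟨v, hv, hzW⟩ := mem_biUnion.1 hz
                exact (mem_sdiff.1 hzW).2 (mem_union_left _ hzS)
              · intro u hu
                rw [disjoint_left]
                intro z hz hze
                obtain ⟨v, hv, hzW⟩ := mem_biUnion.1 hz
                by_cases hvu : v = u
                · exact (mem_sdiff.1 hzW).2 (mem_union_right _ (hvu ▸ hze))
                · exact not_mem_Mv_of_mem_pv G (epn_subset_pv G u hze)
                    (Nv_subset_Mv G hv hvu
                      (neighborFinset_subset_Nv G _ (sdiff_subset hzW)))
              have hsw := Finset.card_nsmul_le_sum S (fun v => (epn G S v).card) 2 hepn2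
              simp only [smul_eq_mul] at hsw
              rw [hcard] at *
              omega
            · push_neg at hWb
              have hWall : ∀ v ∈ S, Wv G S v = S.biUnion (fun v => Wv G S v) := by
                intro v hv
                apply eq_of_subset_of_card_le (subset_biUnion_of_mem (fun v => Wv G S v) hv)
                show (S.biUnion fun v => Wv G S v).card ≤ (Wv G S v).card
                have := hWc v hv
                omega
              obtain ⟨va, hva⟩ := hSne
              have hev : 1 ≤ (S.erase va).card := by
                rw [card_erase_of_mem hva, hcard]; omega
              obtain ⟨vb, hvbE⟩ := card_pos.1 (show 0 < (S.erase va).card by omega)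
              have hvbS : vb ∈ S := mem_of_mem_erase hvbE
              have hvba : vb ≠ va := (mem_erase.1 hvbE).1
              obtain ⟨x₁, hx₁⟩ := card_pos.1
                (show 0 < (epn G S va).card by rw [hepn2e va hva]; omega)
              have hx₁S : x₁ ∉ S := (disjoint_left.1 (epn_disj_S G va)) hx₁
              have hx₁nM : x₁ ∉ Mv G S va := not_mem_Mv_of_mem_pv G (epn_subset_pv G va hx₁)
              have hadj1 : G.Adj va x₁ :=
                (SimpleGraph.mem_neighborFinset _ _ _).1 (epn_subset_nbr G va hx₁)
              have hSMv : ∀ z ∈ S, z ∈ Mv G S va := by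
                intro z hz
                by_cases hzva : z = va
                · exact hzva ▸ hBne va hva
                · exact subset_closedNbhd G _ (mem_erase.2 ⟨hzva, hz⟩)
              have hWM : ∀ z ∈ Wv G S va, z ∈ Mv G S va := by
                intro z hz
                rw [hWall va hva, ← hWall vb hvbS] at hz
                exact Nv_subset_Mv G hvbS hvba (neighborFinset_subset_Nv G _ (sdiff_subset hz))
              set T : Finset V := insert x₁ (S.erase va) with hT
              have hTcard : T.card = γ := by
                rw [hT, card_insert_of_notMem (fun h => hx₁S (mem_of_mem_erase h)),
                  card_erase_of_mem hva, hcard]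
                omega
              have hTNb : closedNbhd G T = Nv G x₁ ∪ Mv G S va := by
                rw [hT, closedNbhd_insert]
                rfl
              have hETsub : S.erase va ⊆ T := subset_insert _ _
              have hT_PDS : IsPDS G T := by
                refine exchange G hS (T := T) (W := {va}) ?_ ?_
                · intro w hw
                  rw [mem_singleton] at hw
                  rw [hw]
                  constructor
                  · rw [hTNb]
                    exact mem_union_left _ (nbr_mem_Nv G hadj1.symm)
                  · have hsub : G.neighborFinset va \ closedNbhd G T ⊆
                        (epn G S va).erase x₁ := by
                      intro z hz
                      rw [mem_sdiff] at hz
                      by_cases hzS : z ∈ S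
                      · exfalso
                        have hzva : z ≠ va := fun h => G.irrefl
                          ((SimpleGraph.mem_neighborFinset _ _ _).1 (h ▸ hz.1))
                        exact hz.2 (subset_closedNbhd G T (hETsub (mem_erase.2 ⟨hzva, hzS⟩)))
                      by_cases hze : z ∈ epn G S va
                      · refine mem_erase.2 ⟨fun h => ?_, hze⟩
                        exact hz.2 (h ▸ subset_closedNbhd G T (mem_insert_self x₁ _))
                      · exfalso
                        have hzW : z ∈ Wv G S va := by
                          rw [Wv_def, mem_sdiff, mem_union]
                          exact ⟨hz.1, fun h => h.elim hzS hze⟩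
                        have : z ∈ Mv G S va := hWM z hzW
                        rw [hWall va hva, ← hWall vb hvbS] at hzW
                        have : z ∈ Nv G vb :=
                          neighborFinset_subset_Nv G _ (sdiff_subset hzW)
                        exact hz.2 (Nv_subset G (hETsub hvbE) this)
                    calc (G.neighborFinset va \ closedNbhd G T).card
                        ≤ ((epn G S va).erase x₁).card := card_le_card hsub
                      _ ≤ 1 := by rw [card_erase_of_mem hx₁, hepn2e va hva]
                · rw [singleton_biUnion, Nb_eq_Mv_union G va hva]
                  refine union_subset (fun z hz => mem_union_left _ ?_)
                    (fun z hz => mem_union_right _ hz)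
                  rw [hTNb]
                  exact mem_union_right _ hz
              have hle := hmax T hT_PDS hTcard
              have hpvE : Nv G va \ Mv G S va = epn G S va := by
                have h1 : epn G S va = pv G S va :=
                  erase_eq_of_notMem (fun h => not_mem_Mv_of_mem_pv G h (hBne va hva))
                rw [h1]
                rfl
              have hNbS : (closedNbhd G S).card = (Mv G S va).card + 2 := by
                rw [Nb_eq_Mv_union G va hva, cardU, hpvE, hepn2e va hva]
              have hTNbc : (closedNbhd G T).card =
                  (Mv G S va).card + (Nv G x₁ \ Mv G S va).card := by
                rw [hTNb, union_comm, cardU]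
              have hx₁mem : x₁ ∈ Nv G x₁ \ Mv G S va :=
                mem_sdiff.2 ⟨self_mem_Nv G x₁, hx₁nM⟩
              have hNx1 : (G.neighborFinset x₁ \ Mv G S va).card ≤ 1 := by
                have h2 : (Nv G x₁ \ Mv G S va).card ≤ 2 := by omega
                have hsub : G.neighborFinset x₁ \ Mv G S va ⊆
                    (Nv G x₁ \ Mv G S va).erase x₁ := by
                  intro z hz
                  rw [mem_sdiff] at hz
                  refine mem_erase.2 ⟨fun h => G.irrefl
                    ((SimpleGraph.mem_neighborFinset _ _ _).1 (h ▸ hz.1)), ?_⟩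
                  exact mem_sdiff.2 ⟨neighborFinset_subset_Nv G _ hz.1, hz.2⟩
                have h3 := card_le_card hsub
                rw [card_erase_of_mem hx₁mem] at h3
                omega
              have hNx1b := card_sdiff_add_card_inter (G.neighborFinset x₁) (Mv G S va)
              have hdx₁ := hdeg x₁
              have hdcx₁ := hdegc x₁
              by_cases hx2 : ∃ w ∈ S.erase va, ∃ x₂ ∈ epn G S w, x₂ ∈ G.neighborFinset x₁
              · obtain ⟨w, hwE, x₂, hx₂e, hx₂N⟩ := hx2
                have hwS : w ∈ S := mem_of_mem_erase hwE
                have hwva : w ≠ va := (mem_erase.1 hwE).1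
                set P : Finset V := {va, w} with hP
                have hPS : P ⊆ S := by
                  rw [hP, insert_subset_iff, singleton_subset_iff]
                  exact ⟨hva, hwS⟩
                have hPcard : P.card = 2 := by
                  rw [hP, card_insert_of_notMem
                    (fun h => hwva (mem_singleton.1 h).symm), card_singleton]
                have he3 : 1 ≤ ((S.erase va).erase w).card := by
                  rw [card_erase_of_mem hwE, card_erase_of_mem hva, hcard]
                  omega
                obtain ⟨v₃, hv₃E⟩ := card_pos.1
                  (show 0 < ((S.erase va).erase w).card by omega)
                have hv₃S : v₃ ∈ S := mem_of_mem_erase (mem_of_mem_erase hv₃E)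
                have hv₃P : v₃ ∈ S \ P := by
                  rw [mem_sdiff, hP, mem_insert, mem_singleton]
                  refine ⟨hv₃S, ?_⟩
                  rintro (h | h)
                  · exact (mem_erase.1 (mem_of_mem_erase hv₃E)).1 h
                  · exact (mem_erase.1 hv₃E).1 h
                set S'' : Finset V := insert x₁ (S \ P) with hS''
                have hS''card : S''.card < γ := by
                  have h1 : S''.card ≤ (S \ P).card + 1 := card_insert_le _ _
                  have h2 : (S \ P).card = S.card - P.card := card_sdiff_of_subset hPS
                  rw [hcard, hPcard] at h2
                  omega
                have hSP'' : S \ P ⊆ S'' := subset_insert _ _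
                have hSsubNb : ∀ z ∈ S, z ∈ closedNbhd G S'' := by
                  intro z hz
                  exact closedNbhd_mono G hSP'' (Nv_subset G hv₃P (hclq v₃ hv₃S z hz))
                have hWsubNb : ∀ y ∈ S, ∀ z ∈ Wv G S y, z ∈ closedNbhd G S'' := by
                  intro y hy z hz
                  rw [hWall y hy, ← hWall v₃ hv₃S] at hz
                  exact closedNbhd_mono G hSP''
                    (Nv_subset G hv₃P (neighborFinset_subset_Nv G _ (sdiff_subset hz)))
                have hS''P : IsPDS G S'' := by
                  refine exchange G hS (T := S'') (W := P) ?_ ?_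
                  · intro y hy
                    have hyS : y ∈ S := hPS hy
                    refine ⟨hSsubNb y hyS, ?_⟩
                    rw [hP, mem_insert, mem_singleton] at hy
                    have key : ∀ (xx : V), xx ∈ epn G S y → xx ∈ closedNbhd G S'' →
                        (G.neighborFinset y \ closedNbhd G S'').card ≤ 1 := by
                      intro xx hxxe hxxNb
                      have hsub : G.neighborFinset y \ closedNbhd G S'' ⊆
                          (epn G S y).erase xx := by
                        intro z hz
                        rw [mem_sdiff] at hz
                        by_cases hzS : z ∈ S
                        · exact absurd (hSsubNb z hzS) hz.2
                        by_cases hze : z ∈ epn G S y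
                        · refine mem_erase.2 ⟨fun h => hz.2 (h ▸ hxxNb), hze⟩
                        · exfalso
                          have hzW : z ∈ Wv G S y := by
                            rw [Wv_def, mem_sdiff, mem_union]
                            exact ⟨hz.1, fun h => h.elim hzS hze⟩
                          exact hz.2 (hWsubNb y hyS z hzW)
                      calc (G.neighborFinset y \ closedNbhd G S'').card
                          ≤ ((epn G S y).erase xx).card := card_le_card hsub
                        _ ≤ 1 := by rw [card_erase_of_mem hxxe, hepn2e y hyS]
                    rcases hy with rfl | rfl
                    · exact key x₁ hx₁
                        (subset_closedNbhd G S'' (mem_insert_self x₁ _))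
                    · exact key x₂ hx₂e
                        (Nv_subset G (mem_insert_self x₁ _)
                          (nbr_mem_Nv G ((SimpleGraph.mem_neighborFinset _ _ _).1 hx₂N)))
                  · rw [closedNbhd_sdiff G S P hPS]
                    exact union_subset
                      (fun z hz => mem_union_left _ (closedNbhd_mono G hSP'' hz))
                      (fun z hz => mem_union_right _ hz)
                have := pdNum_le_card G hS''P
                omega
              · push_neg at hx2
                have hkey : G.neighborFinset x₁ ∩ Mv G S va ⊆ insert va (Wv G S va) := by
                  intro z hz
                  rw [mem_inter] at hz
                  have hzM := hz.2
                  rw [Mv_def, closedNbhd_eq_biUnion] at hzM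
                  obtain ⟨w, hwE, hzNv⟩ := mem_biUnion.1 hzM
                  have hwS : w ∈ S := mem_of_mem_erase hwE
                  have hznE : z ∉ S.erase va := by
                    intro hzE
                    have hadjz : G.Adj x₁ z := (SimpleGraph.mem_neighborFinset _ _ _).1 hz.1
                    exact hx₁nM (Nv_subset_Mv G (mem_of_mem_erase hzE)
                      (mem_erase.1 hzE).1 (nbr_mem_Nv G hadjz.symm))
                  by_cases hzS : z ∈ S
                  · have : z = va := by
                      by_contra hzva
                      exact hznE (mem_erase.2 ⟨hzva, hzS⟩)
                    exact mem_insert.2 (Or.inl this)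
                  · rcases (mem_Nv G).1 hzNv with rfl | hadj
                    · exact absurd hwS hzS
                    · have hzN : z ∈ G.neighborFinset w :=
                        (SimpleGraph.mem_neighborFinset _ _ _).2 hadj
                      have hze : z ∉ epn G S w := fun h => hx2 w hwE z h hz.1
                      have hzW : z ∈ Wv G S w := by
                        rw [Wv_def, mem_sdiff, mem_union]
                        exact ⟨hzN, fun h => h.elim hzS hze⟩
                      rw [hWall w hwS, ← hWall va hva] at hzW
                      exact mem_insert.2 (Or.inr hzW)
                have hcc := card_le_card hkey
                have hins := card_insert_le va (Wv G S va)
                have hWva := hWc va hva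
                omega

end Core

end PDAux


theorem stmt_12 {V : Type*} [Fintype V] (G : SimpleGraph V) (n : ℕ)
    (hn : Fintype.card V = n) (hconn : G.Connected)
    (hdelta : 2 ≤ G.minDegree) (hgamma : 3 ≤ pdNum G) :
    pdRad G ≤ n - pdNum G - max (2 * pdNum G) (pdNum G + G.minDegree) + 1 := by
  classical
  obtain ⟨S₀, hS₀P, hS₀c⟩ := PDAux.exists_pdNum_set G
  have hne : ((Finset.univ : Finset (Finset V)).filter
      (fun T => IsPDS G T ∧ T.card = pdNum G)).Nonempty :=
    ⟨S₀, Finset.mem_filter.2 ⟨Finset.mem_univ _, hS₀P, hS₀c⟩⟩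
  obtain ⟨S, hSmem, hSmax⟩ := Finset.exists_max_image _
    (fun T => (closedNbhd G T).card) hne
  rw [Finset.mem_filter] at hSmem
  obtain ⟨-, hSP, hSc⟩ := hSmem
  have hmax : ∀ T, IsPDS G T → T.card = pdNum G →
      (closedNbhd G T).card ≤ (closedNbhd G S).card := by
    intro T h1 h2
    exact hSmax T (Finset.mem_filter.2 ⟨Finset.mem_univ _, h1, h2⟩)
  have h3γ := PDAux.count3 hSP hSc hmax hdelta hgamma
  set γ := pdNum G with hγdef
  set δ := G.minDegree with hδdef
  set A := max (2 * γ) (γ + δ) with hA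
  have hcount : γ + A ≤ (closedNbhd G S).card := by
    rcases max_choice (2 * γ) (γ + δ) with h' | h'
    · rw [hA, h']
      omega
    · rw [hA, h']
      rcases le_or_gt δ γ with h | h
      · omega
      · have hD := PDAux.countD hSP hSc hmax hdelta hgamma h
        omega
  have hr1 := PDAux.pdRad_le_pdRadS G hSP hSc
  have hr2 := PDAux.pdRadS_le_of G hSP
  rw [hn] at hr2
  omega
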